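/- For the quartic forms p_G(x) = Σ_{i∈V} x_i⁴ + 2 Σ_{{i,j}∈E} x_i² x_j² associated with a graph G = (V,E), the minimum of p_G over the unit sphere equals 1/α(G), where α(G) is the independence number of G (Motzkin–Straus). -/

import Mathlib

open Finset

private def MSQ {n : ℕ} (G : SimpleGraph (Fin n)) [DecidableRel G.Adj] (y : Fin n → ℝ) : ℝ :=
  (∑ i, (y i)^2) + (∑ i, ∑ j, if G.Adj i j then y i * y j else 0)

private lemma split3 {n : ℕ} (u v : Fin n) (h : u ≠ v) (f : Fin n → ℝ) :
    ∑ i, f i = f u + f v + ∑ i ∈ univ \ {u, v}, f i := by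
  rw [Finset.sum_sdiff_eq_sub (subset_univ _), Finset.sum_pair h]
  ring

private lemma MSQ_expand {n : ℕ} (G : SimpleGraph (Fin n)) [DecidableRel G.Adj]
    (y : Fin n → ℝ) (u v : Fin n) (hadj : G.Adj u v) :
    MSQ G y = (y u + y v)^2
      + 2 * y u * (∑ j ∈ univ \ {u, v}, if G.Adj u j then y j else 0)
      + 2 * y v * (∑ j ∈ univ \ {u, v}, if G.Adj v j then y j else 0)
      + ((∑ i ∈ univ \ {u, v}, (y i)^2)
         + ∑ i ∈ univ \ {u, v}, ∑ j ∈ univ \ {u, v}, if G.Adj i j then y i * y j else 0) := by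
  have huv : u ≠ v := G.ne_of_adj hadj
  set T := univ \ ({u, v} : Finset (Fin n)) with hT
  have hd : ∀ i : Fin n, (∑ j, if G.Adj i j then y i * y j else 0)
      = (if G.Adj i u then y i * y u else 0) + (if G.Adj i v then y i * y v else 0)
        + ∑ j ∈ T, if G.Adj i j then y i * y j else 0 :=
    fun i => split3 u v huv _
  have hDouble : (∑ i, ∑ j, if G.Adj i j then y i * y j else 0)
      = ((if G.Adj u u then y u * y u else 0) + (if G.Adj u v then y u * y v else 0)
          + ∑ j ∈ T, if G.Adj u j then y u * y j else 0)
        + ((if G.Adj v u then y v * y u else 0) + (if G.Adj v v then y v * y v else 0)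
          + ∑ j ∈ T, if G.Adj v j then y v * y j else 0)
        + ∑ i ∈ T, ((if G.Adj i u then y i * y u else 0) + (if G.Adj i v then y i * y v else 0)
          + ∑ j ∈ T, if G.Adj i j then y i * y j else 0) := by
    rw [split3 u v huv (fun i => ∑ j, if G.Adj i j then y i * y j else 0), hd u, hd v]
    congr 1
    exact Finset.sum_congr rfl fun i _ => hd i
  have hsymm : ∀ w : Fin n, (∑ i ∈ T, if G.Adj i w then y i * y w else 0)
      = y w * ∑ i ∈ T, if G.Adj w i then y i else 0 := by
    intro w
    rw [Finset.mul_sum]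
    refine Finset.sum_congr rfl fun i _ => ?_
    by_cases h : G.Adj i w
    · rw [if_pos h, if_pos (G.adj_symm h)]; ring
    · rw [if_neg h, if_neg (fun h' => h (G.adj_symm h'))]; ring
  have hfac : ∀ w : Fin n, (∑ j ∈ T, if G.Adj w j then y w * y j else 0)
      = y w * ∑ j ∈ T, if G.Adj w j then y j else 0 := by
    intro w
    rw [Finset.mul_sum]
    refine Finset.sum_congr rfl fun j _ => ?_
    split <;> ring
  have hSq : (∑ i, (y i)^2) = (y u)^2 + (y v)^2 + ∑ i ∈ T, (y i)^2 :=
    split3 u v huv _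
  have hT2 : (∑ i ∈ T, ((if G.Adj i u then y i * y u else 0) + (if G.Adj i v then y i * y v else 0)
          + ∑ j ∈ T, if G.Adj i j then y i * y j else 0))
      = y u * (∑ i ∈ T, if G.Adj u i then y i else 0)
        + y v * (∑ i ∈ T, if G.Adj v i then y i else 0)
        + ∑ i ∈ T, ∑ j ∈ T, if G.Adj i j then y i * y j else 0 := by
    rw [Finset.sum_add_distrib, Finset.sum_add_distrib, hsymm u, hsymm v]
  unfold MSQ
  rw [hSq, hDouble, hT2, hfac u, hfac v]
  simp only [G.irrefl, if_neg, if_false, if_pos hadj, if_pos (G.adj_symm hadj)]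
  ring

private def MSshift {n : ℕ} (y : Fin n → ℝ) (u v : Fin n) : Fin n → ℝ :=
  fun i => if i = u then 0 else if i = v then y u + y v else y i

private lemma MSshift_mem_T {n : ℕ} {u v i : Fin n} (hi : i ∈ univ \ ({u, v} : Finset (Fin n))) :
    i ≠ u ∧ i ≠ v := by
  simp only [mem_sdiff, mem_insert, mem_singleton] at hi
  exact ⟨fun h => hi.2 (Or.inl h), fun h => hi.2 (Or.inr h)⟩

private lemma MSshift_le {n : ℕ} (G : SimpleGraph (Fin n)) [DecidableRel G.Adj]
    (y : Fin n → ℝ) (u v : Fin n) (hadj : G.Adj u v) (hyu : 0 ≤ y u)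
    (hcond : (∑ j ∈ univ \ {u, v}, if G.Adj v j then y j else 0)
      ≤ (∑ j ∈ univ \ {u, v}, if G.Adj u j then y j else 0)) :
    MSQ G (MSshift y u v) ≤ MSQ G y := by
  have huv : u ≠ v := G.ne_of_adj hadj
  rw [MSQ_expand G y u v hadj, MSQ_expand G (MSshift y u v) u v hadj]
  have h1 : MSshift y u v u = 0 := by simp [MSshift]
  have h2 : MSshift y u v v = y u + y v := by simp [MSshift, huv.symm]
  have h3 : ∀ f : Fin n → ℝ → ℝ, (∑ i ∈ univ \ ({u, v} : Finset (Fin n)), f i (MSshift y u v i))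
      = ∑ i ∈ univ \ ({u, v} : Finset (Fin n)), f i (y i) := by
    intro f
    refine Finset.sum_congr rfl fun i hi => ?_
    obtain ⟨h4, h5⟩ := MSshift_mem_T hi
    rw [MSshift, if_neg h4, if_neg h5]
  rw [h1, h2]
  rw [h3 (fun i t => if G.Adj u i then t else 0), h3 (fun i t => if G.Adj v i then t else 0),
    h3 (fun i t => t ^ 2)]
  have h6 : (∑ i ∈ univ \ ({u, v} : Finset (Fin n)), ∑ j ∈ univ \ ({u, v} : Finset (Fin n)),
      if G.Adj i j then MSshift y u v i * MSshift y u v j else 0)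
      = ∑ i ∈ univ \ ({u, v} : Finset (Fin n)), ∑ j ∈ univ \ ({u, v} : Finset (Fin n)),
      if G.Adj i j then y i * y j else 0 := by
    refine Finset.sum_congr rfl fun i hi => Finset.sum_congr rfl fun j hj => ?_
    obtain ⟨h4, h5⟩ := MSshift_mem_T hi
    obtain ⟨h4', h5'⟩ := MSshift_mem_T hj
    simp only [MSshift, if_neg h4, if_neg h5, if_neg h4', if_neg h5']
  rw [h6]
  nlinarith [mul_le_mul_of_nonneg_left hcond hyu]

private lemma MSshift_sum {n : ℕ} (y : Fin n → ℝ) (u v : Fin n) (huv : u ≠ v) :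
    ∑ i, MSshift y u v i = ∑ i, y i := by
  rw [split3 u v huv (MSshift y u v), split3 u v huv y]
  have h1 : MSshift y u v u = 0 := by simp [MSshift]
  have h2 : MSshift y u v v = y u + y v := by simp [MSshift, huv.symm]
  have h3 : (∑ i ∈ univ \ ({u, v} : Finset (Fin n)), MSshift y u v i)
      = ∑ i ∈ univ \ ({u, v} : Finset (Fin n)), y i := by
    refine Finset.sum_congr rfl fun i hi => ?_
    obtain ⟨h4, h5⟩ := MSshift_mem_T hi
    rw [MSshift, if_neg h4, if_neg h5]
  rw [h1, h2, h3]; ring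

private lemma MSshift_nonneg {n : ℕ} (y : Fin n → ℝ) (u v : Fin n) (hy : ∀ i, 0 ≤ y i) :
    ∀ i, 0 ≤ MSshift y u v i := by
  intro i
  rw [MSshift]
  split
  · exact le_refl 0
  · split
    · exact add_nonneg (hy u) (hy v)
    · exact hy i

private lemma MSshift_support {n : ℕ} (y : Fin n → ℝ) (u v : Fin n) (huv : u ≠ v)
    (hv : y v ≠ 0) :
    (univ.filter fun i => MSshift y u v i ≠ 0) ⊆ (univ.filter fun i => y i ≠ 0).erase u := by
  intro i hi
  simp only [mem_filter, mem_univ, true_and] at hi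
  rw [Finset.mem_erase]
  by_cases h : i = u
  · exfalso; rw [MSshift, if_pos h] at hi; exact hi rfl
  constructor
  · exact h
  simp only [mem_filter, mem_univ, true_and]
  by_cases h' : i = v
  · rw [h']; exact hv
  · rw [MSshift, if_neg h, if_neg h'] at hi; exact hi

private lemma MSkey {n : ℕ} (G : SimpleGraph (Fin n)) [DecidableRel G.Adj] (α : ℕ)
    (hα : IsGreatest {k : ℕ | ∃ s : Finset (Fin n),
      (∀ i ∈ s, ∀ j ∈ s, ¬ G.Adj i j) ∧ s.card = k} α) :
    ∀ m : ℕ, ∀ y : Fin n → ℝ, (univ.filter fun i => y i ≠ 0).card ≤ m →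
      (∀ i, 0 ≤ y i) → (∑ i, y i) = 1 → 1 / (α : ℝ) ≤ MSQ G y := by
  intro m
  induction m with
  | zero =>
    intro y hcard hpos hsum
    exfalso
    have hfe : (univ.filter fun i => y i ≠ 0) = ∅ := Finset.card_eq_zero.mp (Nat.le_zero.mp hcard)
    have hz : ∀ i, y i = 0 := by
      intro i
      by_contra h
      have : i ∈ (univ.filter fun i => y i ≠ 0) := by simp [h]
      rw [hfe] at this
      exact absurd this (Finset.notMem_empty i)
    rw [Finset.sum_eq_zero (fun i _ => hz i)] at hsum
    norm_num at hsum
  | succ m ih =>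
    intro y hcard hpos hsum
    by_cases hE : ∃ u v, y u ≠ 0 ∧ y v ≠ 0 ∧ G.Adj u v
    · obtain ⟨u, v, hu, hv, hadj⟩ := hE
      have huv : u ≠ v := G.ne_of_adj hadj
      have humem : u ∈ univ.filter fun i => y i ≠ 0 := by simp [hu]
      have hvmem : v ∈ univ.filter fun i => y i ≠ 0 := by simp [hv]
      rcases le_total (∑ j ∈ univ \ {u, v}, if G.Adj v j then y j else 0)
        (∑ j ∈ univ \ {u, v}, if G.Adj u j then y j else 0) with hle | hle
      · refine le_trans (ih (MSshift y u v) ?_ (MSshift_nonneg y u v hpos) ?_)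
          (MSshift_le G y u v hadj (hpos u) hle)
        · have h1 := Finset.card_le_card (MSshift_support y u v huv hv)
          rw [Finset.card_erase_of_mem humem] at h1
          omega
        · rw [MSshift_sum y u v huv, hsum]
      · have hle2 : (∑ j ∈ univ \ {v, u}, if G.Adj u j then y j else 0)
            ≤ ∑ j ∈ univ \ {v, u}, if G.Adj v j then y j else 0 := by
          rw [Finset.pair_comm v u]; exact hle
        refine le_trans (ih (MSshift y v u) ?_ (MSshift_nonneg y v u hpos) ?_)
          (MSshift_le G y v u (G.adj_symm hadj) (hpos v) hle2)
        · have h1 := Finset.card_le_card (MSshift_support y v u huv.symm hu)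
          rw [Finset.card_erase_of_mem hvmem] at h1
          omega
        · rw [MSshift_sum y v u huv.symm, hsum]
    · push_neg at hE
      set s : Finset (Fin n) := univ.filter fun i => y i ≠ 0 with hs
      have hind : ∀ i ∈ s, ∀ j ∈ s, ¬ G.Adj i j := by
        intro i hi j hj
        simp only [hs, mem_filter, mem_univ, true_and] at hi hj
        exact hE i j hi hj
      have hsα : s.card ≤ α := hα.2 ⟨s, hind, rfl⟩
      have hne : s.Nonempty := by
        by_contra h
        rw [Finset.not_nonempty_iff_eq_empty] at h
        have hz : ∀ i, y i = 0 := by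
          intro i
          by_contra h'
          have : i ∈ s := by simp [hs, h']
          rw [h] at this
          exact absurd this (Finset.notMem_empty i)
        rw [Finset.sum_eq_zero (fun i _ => hz i)] at hsum
        norm_num at hsum
      have hα1 : 1 ≤ α := le_trans (Finset.card_pos.mpr hne) hsα
      have hαpos : (0:ℝ) < (α : ℝ) := by exact_mod_cast hα1
      have hsum' : ∑ i ∈ s, y i = 1 := by
        rw [hs, Finset.sum_filter_ne_zero, hsum]
      have hcs : (1:ℝ) ≤ (s.card : ℝ) * ∑ i ∈ s, (y i)^2 := by
        have := sq_sum_le_card_mul_sum_sq (s := s) (f := y)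
        rw [hsum'] at this
        simpa using this
      have hsub : (∑ i ∈ s, (y i)^2) ≤ ∑ i, (y i)^2 :=
        Finset.sum_le_sum_of_subset_of_nonneg (subset_univ s) (fun i _ _ => sq_nonneg _)
      have hsq_nonneg : (0:ℝ) ≤ ∑ i, (y i)^2 := Finset.sum_nonneg fun i _ => sq_nonneg _
      have h1 : (1:ℝ) ≤ (α : ℝ) * ∑ i, (y i)^2 := by
        calc (1:ℝ) ≤ (s.card : ℝ) * ∑ i ∈ s, (y i)^2 := hcs
          _ ≤ (α : ℝ) * ∑ i ∈ s, (y i)^2 := by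
              apply mul_le_mul_of_nonneg_right (by exact_mod_cast hsα)
              nlinarith [hcs, Nat.cast_nonneg (α := ℝ) s.card]
          _ ≤ (α : ℝ) * ∑ i, (y i)^2 := by
              apply mul_le_mul_of_nonneg_left hsub (le_of_lt hαpos)
      have hD : (0:ℝ) ≤ ∑ i, ∑ j, if G.Adj i j then y i * y j else 0 := by
        apply Finset.sum_nonneg
        intro i _
        apply Finset.sum_nonneg
        intro j _
        split
        · exact mul_nonneg (hpos i) (hpos j)
        · exact le_refl 0
      rw [MSQ]
      rw [div_le_iff₀ hαpos]
      nlinarith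

/-- Motzkin–Straus: the minimum of the quartic form
`p_G(x) = ∑ i, x i ^ 4 + ∑ i, ∑ j, (if G.Adj i j then x i ^ 2 * x j ^ 2 else 0)`
(the double sum counts each edge twice, giving `2 ∑_{{i,j} ∈ E} x_i² x_j²`)
over the unit sphere equals `1 / α(G)` where `α(G)` is the independence number. -/
theorem motzkin_straus (n : ℕ) (hn : 1 ≤ n) (G : SimpleGraph (Fin n))
    [DecidableRel G.Adj] (α : ℕ)
    (hα : IsGreatest {k : ℕ | ∃ s : Finset (Fin n),
      (∀ i ∈ s, ∀ j ∈ s, ¬ G.Adj i j) ∧ s.card = k} α) :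
    IsLeast {v : ℝ | ∃ x : Fin n → ℝ, (∑ i, (x i) ^ 2) = 1 ∧
      (∑ i, (x i) ^ 4) + (∑ i, ∑ j, if G.Adj i j then (x i) ^ 2 * (x j) ^ 2 else 0) = v}
      (1 / (α : ℝ)) := by
  have hα1 : 1 ≤ α := by
    apply hα.2
    refine ⟨{⟨0, hn⟩}, ?_, by simp⟩
    intro i hi j hj
    simp only [Finset.mem_singleton] at hi hj
    rw [hi, hj]
    exact G.irrefl
  have hαpos : (0:ℝ) < (α : ℝ) := by exact_mod_cast hα1
  constructor
  · obtain ⟨s, hind, hcard⟩ := hα.1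
    set x : Fin n → ℝ := fun i => if i ∈ s then Real.sqrt (α:ℝ)⁻¹ else 0 with hx
    have hsq : ∀ i, (x i)^2 = if i ∈ s then (α:ℝ)⁻¹ else 0 := by
      intro i
      show (if i ∈ s then Real.sqrt (α:ℝ)⁻¹ else 0)^2 = _
      by_cases hi : i ∈ s
      · rw [if_pos hi, if_pos hi, Real.sq_sqrt (inv_nonneg.mpr hαpos.le)]
      · rw [if_neg hi, if_neg hi]; ring
    have hsum2 : (∑ i, (x i)^2) = 1 := by
      simp only [hsq]
      rw [Finset.sum_ite_mem, Finset.univ_inter, Finset.sum_const, hcard, nsmul_eq_mul]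
      field_simp
    refine ⟨x, hsum2, ?_⟩
    have h4 : (∑ i, (x i)^4) = 1 / (α:ℝ) := by
      have : ∀ i, (x i)^4 = if i ∈ s then ((α:ℝ)⁻¹)^2 else 0 := by
        intro i
        have : (x i)^4 = ((x i)^2)^2 := by ring
        rw [this, hsq]
        split <;> ring
      simp only [this]
      rw [Finset.sum_ite_mem, Finset.univ_inter, Finset.sum_const, hcard, nsmul_eq_mul]
      field_simp
    have hD : (∑ i, ∑ j, if G.Adj i j then (x i)^2 * (x j)^2 else 0) = 0 := by
      apply Finset.sum_eq_zero
      intro i _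
      apply Finset.sum_eq_zero
      intro j _
      by_cases hadj : G.Adj i j
      · rw [if_pos hadj]
        by_cases hi : i ∈ s
        · by_cases hj : j ∈ s
          · exact absurd hadj (hind i hi j hj)
          · rw [hsq j, if_neg hj]; ring
        · rw [hsq i, if_neg hi]; ring
      · rw [if_neg hadj]
    rw [h4, hD]
    ring
  · rintro v ⟨x, hx1, hval⟩
    have key := MSkey G α hα (univ.filter fun i => (x · ^ 2) i ≠ 0).card (fun i => x i ^ 2)
      (le_refl _) (fun i => sq_nonneg _) hx1
    rw [MSQ] at key
    have h1 : (∑ i, ((x i)^2)^2) = ∑ i, (x i)^4 := by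
      apply Finset.sum_congr rfl
      intro i _
      ring
    rw [h1] at key
    rw [← hval]
    exact key
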